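/- In the quotient algebra A[M^{m×n}]/I, the image of S(ω_{‖f‖}) under y_i ↦ s_i, namely ∏_{l∈[k]} s_{f(l)}, is a sum of admissible monomials ω_{f,g'} all of whose first components f' lie in the orbit ‖f‖ of f under precomposition by S_k; hence the images of distinct degree-k basis monomials of A[y_1,…,y_m] under s lie in linearly independent subspaces indexed by the orbits ‖f‖. -/

import Mathlib

open MvPolynomial

lemma prod_X_eq_monomial' {σ : Type*} {A : Type*} [CommRing A] {ι : Type*} (s : Finset ι)
    (e : ι → σ) :
    (∏ l ∈ s, X (e l) : MvPolynomial σ A) = monomial (∑ l ∈ s, Finsupp.single (e l) 1) 1 := by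
  induction s using Finset.cons_induction with
  | empty => simp
  | cons a s ha ih =>
    rw [Finset.prod_cons, Finset.sum_cons, ih, X, monomial_mul, one_mul]

lemma sum_single_apply_ne_zero' {σ : Type*} {k : ℕ} (e : Fin k → σ) (a : σ) :
    (∑ l, Finsupp.single (e l) 1 : σ →₀ ℕ) a ≠ 0 ↔ ∃ l, e l = a := by
  classical
  rw [Finsupp.finset_sum_apply]
  simp [Finsupp.single_apply, Finset.sum_eq_zero_iff, Finset.filter_eq_empty_iff]

lemma orbit_of_eq_sum' {m n k : ℕ} {f1 f2 : Fin k → Fin m} {g1 g2 : Fin k → Fin n}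
    (_h1 : Function.Injective g1) (h2 : Function.Injective g2)
    (h : (∑ l, Finsupp.single ((f1 l, g1 l) : Fin m × Fin n) 1)
       = ∑ l, Finsupp.single ((f2 l, g2 l) : Fin m × Fin n) 1) :
    ∃ ε : Equiv.Perm (Fin k), f2 = f1 ∘ ε := by
  classical
  set e1 : Fin k → Fin m × Fin n := fun l => (f1 l, g1 l) with he1
  set e2 : Fin k → Fin m × Fin n := fun l => (f2 l, g2 l) with he2
  have hrange : ∀ a, (∃ l, e2 l = a) → ∃ l, e1 l = a := by
    intro a ha
    rw [← sum_single_apply_ne_zero' e1 a, h, sum_single_apply_ne_zero' e2 a]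
    exact ha
  choose σ hσ using fun l => hrange (e2 l) ⟨l, rfl⟩
  have hσinj : Function.Injective σ := by
    intro a b hab
    apply h2
    have := (hσ a).symm.trans ((congrArg e1 hab).trans (hσ b))
    exact congrArg Prod.snd this
  refine ⟨Equiv.ofBijective σ ((Finite.injective_iff_bijective).mp hσinj), ?_⟩
  funext l
  exact (congrArg Prod.fst (hσ l)).symm

/-- The orbit equivalence on `f : [k] → [m]` under precomposition with
permutations of `[k]`. -/
def orbSetoid (k m : ℕ) : Setoid (Fin k → Fin m) where
  r f f' := ∃ ε : Equiv.Perm (Fin k), f' = f ∘ ε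
  iseqv := by
    constructor
    · intro f; exact ⟨Equiv.refl _, rfl⟩
    · rintro f f' ⟨ε, rfl⟩; exact ⟨ε.symm, by ext l; simp⟩
    · rintro f f' f'' ⟨ε, rfl⟩ ⟨ε', rfl⟩; exact ⟨ε'.trans ε, by ext l; simp⟩

/-- The span of the admissible monomials whose first component lies in the
orbit `‖f‖`. -/
noncomputable def orbSpan (A : Type*) [CommRing A] (m n k : ℕ) (f : Fin k → Fin m) :
    Submodule A (MvPolynomial (Fin m × Fin n) A) :=
  Submodule.span A
    {w : MvPolynomial (Fin m × Fin n) A |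
      ∃ (f' : Fin k → Fin m) (g : Fin k → Fin n),
        (∃ ε : Equiv.Perm (Fin k), f' = f ∘ ε) ∧ Function.Injective g ∧
          w = ∏ l, X (f' l, g l)}

/-- The set of exponent vectors of admissible monomials with first component in
the orbit of `f`. -/
def orbExp (m n k : ℕ) (f : Fin k → Fin m) : Set ((Fin m × Fin n) →₀ ℕ) :=
  {d | ∃ (f' : Fin k → Fin m) (g : Fin k → Fin n),
        (∃ ε : Equiv.Perm (Fin k), f' = f ∘ ε) ∧ Function.Injective g ∧
          d = ∑ l, Finsupp.single (f' l, g l) 1}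

lemma orbSpan_le_supported (A : Type*) [CommRing A] (m n k : ℕ) (f : Fin k → Fin m) :
    orbSpan A m n k f ≤ restrictSupport A (orbExp m n k f) := by
  rw [orbSpan, Submodule.span_le]
  rintro w ⟨f', g, hf', hg, rfl⟩
  rw [prod_X_eq_monomial']
  rw [SetLike.mem_coe, mem_restrictSupport_iff]
  intro a ha
  have ha' : MvPolynomial.coeff a ((monomial (∑ l, Finsupp.single ((f' l, g l) : Fin m × Fin n) 1)) (1 : A)) ≠ 0 :=
    MvPolynomial.mem_support_iff.mp (Finset.mem_coe.mp ha)
  have hc : a = ∑ l, Finsupp.single ((f' l, g l) : Fin m × Fin n) 1 := by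
    by_contra hne
    rw [coeff_monomial, if_neg (fun hh => hne hh.symm)] at ha'
    exact ha' rfl
  exact ⟨f', g, hf', hg, hc⟩

lemma orbExp_disjoint (m n k : ℕ) {f1 f2 : Fin k → Fin m}
    (h : ¬ ∃ ε : Equiv.Perm (Fin k), f2 = f1 ∘ ε) :
    Disjoint (orbExp m n k f1) (orbExp m n k f2) := by
  rw [Set.disjoint_left]
  rintro d ⟨p1, g1, ⟨ε1, rfl⟩, hg1, rfl⟩ ⟨p2, g2, ⟨ε2, hp2⟩, hg2, hd⟩
  apply h
  obtain ⟨ε, hε⟩ := orbit_of_eq_sum' hg1 hg2 hd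
  rw [hp2] at hε
  -- f2 ∘ ε2 = (f1 ∘ ε1) ∘ ε
  refine ⟨(ε2.symm.trans ε).trans ε1, ?_⟩
  funext l
  have := congrFun hε (ε2.symm l)
  show f2 l = f1 (ε1 (ε (ε2.symm l)))
  simpa using this

lemma disjoint_restrictSupport' {σ A : Type*} [CommRing A] {s t : Set (σ →₀ ℕ)}
    (h : Disjoint s t) : Disjoint (restrictSupport A s) (restrictSupport A t) := by
  rw [Submodule.disjoint_def]
  intro p hs ht
  rw [mem_restrictSupport_iff] at hs ht
  refine MvPolynomial.ext _ _ fun d => ?_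
  rw [coeff_zero]
  by_contra hd
  have hd' : d ∈ p.support := mem_support_iff.mpr hd
  exact Set.disjoint_left.mp h (hs hd') (ht hd')

theorem stmt_18 {A : Type*} [CommRing A] (m n k : ℕ) (f : Fin k → Fin m) :
    ((∏ l, ∑ j, (X (f l, j) : MvPolynomial (Fin m × Fin n) A)) -
        (∑ g ∈ Finset.univ.filter (fun g : Fin k → Fin n => Function.Injective g),
          ∏ l, X (f l, g l)) ∈
      Ideal.span {w : MvPolynomial (Fin m × Fin n) A |
        ∃ (i i' : Fin m) (j : Fin n), w = X (i, j) * X (i', j)}) ∧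
    ((∑ g ∈ Finset.univ.filter (fun g : Fin k → Fin n => Function.Injective g),
        ∏ l, (X (f l, g l) : MvPolynomial (Fin m × Fin n) A)) ∈
      orbSpan A m n k f) ∧
    iSupIndep (fun c : Quotient (orbSetoid k m) => orbSpan A m n k c.out) := by
  classical
  refine ⟨?_, ?_, ?_⟩
  · -- part 1
    rw [Finset.prod_univ_sum (fun _ => Finset.univ) (fun l j => (X (f l, j)))]
    rw [Fintype.piFinset_univ]
    rw [← Finset.sum_filter_add_sum_filter_not Finset.univ
      (fun g : Fin k → Fin n => Function.Injective g) (fun g => ∏ l, X (f l, g l)),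
      add_sub_cancel_left]
    refine Ideal.sum_mem _ ?_
    intro g hg
    rw [Finset.mem_filter] at hg
    obtain ⟨l, l', hll', hne⟩ : ∃ l l', g l = g l' ∧ l ≠ l' := by
      by_contra hc
      push_neg at hc
      exact hg.2 (fun a b hab => hc a b hab)
    have hgen : (X (f l, g l) * X (f l', g l') : MvPolynomial (Fin m × Fin n) A) ∈
        Ideal.span {w : MvPolynomial (Fin m × Fin n) A |
          ∃ (i i' : Fin m) (j : Fin n), w = X (i, j) * X (i', j)} :=
      Ideal.subset_span ⟨f l, f l', g l, by rw [hll']⟩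
    have hl' : l' ∈ Finset.univ.erase l := Finset.mem_erase.mpr ⟨Ne.symm hne, Finset.mem_univ _⟩
    have key : (∏ x, X (f x, g x) : MvPolynomial (Fin m × Fin n) A) =
        (X (f l, g l) * X (f l', g l')) * ∏ x ∈ (Finset.univ.erase l).erase l', X (f x, g x) := by
      rw [mul_assoc, ← Finset.mul_prod_erase _ _ (Finset.mem_univ l), ← Finset.mul_prod_erase _ _ hl']
    rw [key]
    exact Ideal.mul_mem_right _ _ hgen
  · -- part 2
    refine Submodule.sum_mem _ ?_
    intro g hg
    rw [Finset.mem_filter] at hg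
    exact Submodule.subset_span ⟨f, g, ⟨Equiv.refl _, rfl⟩, hg.2, rfl⟩
  · -- part 3
    refine iSupIndep.mono ?_ (fun c => orbSpan_le_supported A m n k c.out)
    rw [iSupIndep_def]
    intro c
    refine Disjoint.mono_right ?_
      (disjoint_restrictSupport' (A := A) (s := orbExp m n k c.out)
        (t := ⋃ c' ∈ {c'' | c'' ≠ c}, orbExp m n k (Quotient.out c')) ?_)
    · refine iSup_le fun c' => iSup_le fun hc' => ?_
      exact restrictSupport_mono A (Set.subset_biUnion_of_mem (u := fun c' => orbExp m n k (Quotient.out c')) hc')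
    · rw [Set.disjoint_iUnion₂_right]
      intro c' hc'
      apply orbExp_disjoint
      intro hrel
      apply hc'
      have := Quotient.sound (s := orbSetoid k m) hrel
      rw [Quotient.out_eq, Quotient.out_eq] at this
      exact this.symm
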